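/- Let G be a graph that has a c-deletion set of size at most k. Then the set D_G^{k+c} of all vertices of G of degree at least k+c is a (k·c·(k+c))-deletion set of G of size at most k, i.e., |D_G^{k+c}| ≤ k and every connected component of G \ D_G^{k+c} has at most k·c·(k+c) vertices. -/

import Mathlib

/-- Reachability within the vertex subset `S` using the adjacency relation `R`. -/
def RelReachIn {W : Type*} (R : W → W → Prop) (S : Set W) : W → W → Prop :=
  Relation.ReflTransGen (fun x y => x ∈ S ∧ y ∈ S ∧ R x y)

/-- The connected component, inside the induced subgraph on `S`, containing `a`. -/
def RelCompIn {W : Type*} (R : W → W → Prop) (S : Set W) (a : W) : Set W :=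
  {b | b ∈ S ∧ RelReachIn R S a b}

lemma relReachIn_mono {W : Type*} {R : W → W → Prop} {S T : Set W} (h : S ⊆ T) {a b : W}
    (hab : RelReachIn R S a b) : RelReachIn R T a b :=
  Relation.ReflTransGen.mono (r := fun x y => x ∈ S ∧ y ∈ S ∧ R x y)
    (p := fun x y => x ∈ T ∧ y ∈ T ∧ R x y) (fun x y ⟨hx, hy, hr⟩ => ⟨h hx, h hy, hr⟩) a b hab

lemma relReachIn_symm {W : Type*} {R : W → W → Prop} (hR : Symmetric R) {S : Set W} {a b : W}
    (hab : RelReachIn R S a b) : RelReachIn R S b a :=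
  (@Relation.ReflTransGen.stdSymm _ (fun x y => x ∈ S ∧ y ∈ S ∧ R x y)
    ⟨fun x y ⟨hx, hy, hr⟩ => ⟨hy, hx, hR hr⟩⟩).symm _ _ hab

lemma ncard_biUnion_le' {α β : Type*} {s : Set α} (hs : s.Finite) (f : α → Set β)
    (hf : ∀ a, (f a).Finite) {m : ℕ} (hb : ∀ a ∈ s, (f a).ncard ≤ m) :
    (⋃ a ∈ s, f a).ncard ≤ s.ncard * m := by
  refine Set.Finite.induction_on
    (motive := fun s _ => (∀ a ∈ s, (f a).ncard ≤ m) → (⋃ a ∈ s, f a).ncard ≤ s.ncard * m)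
    s hs (by simp) ?_ hb
  intro a s ha hsf ih hb'
  rw [Set.biUnion_insert]
  have h2 : (⋃ x ∈ s, f x).ncard ≤ s.ncard * m :=
    ih (fun x hx => hb' x (Set.mem_insert_of_mem _ hx))
  have h3 : (insert a s).ncard = s.ncard + 1 := by
    rw [Set.ncard_insert_of_notMem ha hsf]
  rw [h3]
  have h4 : (f a).ncard ≤ m := hb' a (Set.mem_insert _ _)
  calc (f a ∪ ⋃ x ∈ s, f x).ncard ≤ (f a).ncard + (⋃ x ∈ s, f x).ncard :=
        Set.ncard_union_le _ _
    _ ≤ m + s.ncard * m := Nat.add_le_add h4 h2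
    _ = (s.ncard + 1) * m := by ring

lemma exists_boundary {W : Type*} {R : W → W → Prop} {S T : Set W} :
    ∀ {b z : W}, RelReachIn R S b z → b ∉ T → z ∈ T →
    ∃ v w, v ∈ S ∧ v ∈ T ∧ w ∈ S ∧ w ∉ T ∧ R w v ∧
      RelReachIn R (S \ T) b w ∧ RelReachIn R S b v := by
  intro b z h
  induction h using Relation.ReflTransGen.head_induction_on with
  | refl => intro hb hz; exact absurd hz hb
  | @head x y hstep htail ih =>
    intro hb hz
    obtain ⟨hxS, hyS, hR⟩ := hstep
    by_cases hyT : y ∈ T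
    · exact ⟨_, _, hyS, hyT, hxS, hb, hR, Relation.ReflTransGen.refl,
        Relation.ReflTransGen.single ⟨hxS, hyS, hR⟩⟩
    · obtain ⟨v, w, hvS, hvT, hwS, hwT, hRwv, hr1, hr2⟩ := ih hyT hz
      exact ⟨v, w, hvS, hvT, hwS, hwT, hRwv,
        Relation.ReflTransGen.head ⟨⟨hxS, hb⟩, ⟨hyS, hyT⟩, hR⟩ hr1,
        Relation.ReflTransGen.head ⟨hxS, hyS, hR⟩ hr2⟩

theorem high_degree_set_is_deletion_set {V : Type*} [Fintype V]
    (G : SimpleGraph V) [DecidableRel G.Adj] (c k : ℕ) (hc : 1 ≤ c) (hk : 1 ≤ k)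
    (hdel : ∃ D' : Set V, D'.ncard ≤ k ∧ ∀ a ∉ D', (RelCompIn G.Adj D'ᶜ a).ncard ≤ c) :
    {v : V | k + c ≤ G.degree v}.ncard ≤ k ∧
    ∀ a ∉ {v : V | k + c ≤ G.degree v},
      (RelCompIn G.Adj {v : V | k + c ≤ G.degree v}ᶜ a).ncard ≤ k * c * (k + c) := by
  classical
  obtain ⟨D', hD'k, hD'c⟩ := hdel
  set D : Set V := {v : V | k + c ≤ G.degree v} with hDdef
  -- Step 1: D ⊆ D'
  have hsub : D ⊆ D' := by
    intro v hv
    by_contra hvD'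
    have hvD'c : v ∈ D'ᶜ := hvD'
    have hcover : insert v (G.neighborSet v) ⊆ D' ∪ RelCompIn G.Adj D'ᶜ v := by
      intro x hx
      rcases hx with rfl | hx
      · exact Or.inr ⟨hvD'c, Relation.ReflTransGen.refl⟩
      · by_cases hxD' : x ∈ D'
        · exact Or.inl hxD'
        · exact Or.inr ⟨hxD', Relation.ReflTransGen.single ⟨hvD'c, hxD', hx⟩⟩
    have h1 : (insert v (G.neighborSet v)).ncard = G.degree v + 1 := by
      rw [Set.ncard_insert_of_notMem (G.notMem_neighborSet_self) (Set.toFinite _)]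
      congr 1
      rw [Set.ncard_eq_toFinset_card', ← SimpleGraph.neighborFinset_def]
      rfl
    have h2 : (insert v (G.neighborSet v)).ncard ≤ k + c := by
      calc (insert v (G.neighborSet v)).ncard
          ≤ (D' ∪ RelCompIn G.Adj D'ᶜ v).ncard :=
            Set.ncard_le_ncard hcover (Set.toFinite _)
        _ ≤ D'.ncard + (RelCompIn G.Adj D'ᶜ v).ncard :=
            Set.ncard_union_le _ _
        _ ≤ k + c := Nat.add_le_add hD'k (hD'c v hvD')
    have hv' : k + c ≤ G.degree v := hv
    omega
  refine ⟨le_trans (Set.ncard_le_ncard hsub (Set.toFinite _)) hD'k, ?_⟩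
  intro a ha
  set C : Set V := RelCompIn G.Adj Dᶜ a with hCdef
  -- members of C have small degree
  have hCdeg : ∀ b ∈ C, G.degree b ≤ k + c - 1 := by
    intro b hb
    have : ¬ (k + c ≤ G.degree b) := hb.1
    omega
  by_cases hCD' : ∃ v, v ∈ C ∧ v ∈ D'
  · -- Case 2: C meets D'
    obtain ⟨v0, hv0C, hv0D'⟩ := hCD'
    have hcover : C ⊆ ⋃ v ∈ C ∩ D',
        ({v} ∪ ⋃ w ∈ G.neighborSet v ∩ D'ᶜ, RelCompIn G.Adj D'ᶜ w) := by
      intro b hb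
      by_cases hbD' : b ∈ D'
      · exact Set.mem_biUnion ⟨hb, hbD'⟩ (Or.inl rfl)
      · -- reach from b to v0 in Dᶜ
        have hreach : RelReachIn G.Adj Dᶜ b v0 :=
          Relation.ReflTransGen.trans (relReachIn_symm (fun _ _ h => G.adj_symm h) hb.2) hv0C.2
        obtain ⟨v, w, hvS, hvT, hwS, hwT, hRwv, hr1, hr2⟩ :=
          exists_boundary (T := D') hreach hbD' hv0D'
        have hvC : v ∈ C ∩ D' :=
          ⟨⟨hvS, Relation.ReflTransGen.trans hb.2 hr2⟩, hvT⟩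
        have hbw : b ∈ RelCompIn G.Adj D'ᶜ w := by
          refine ⟨hbD', relReachIn_symm (fun _ _ h => G.adj_symm h) ?_⟩
          exact relReachIn_mono (fun x hx => hx.2) hr1
        refine Set.mem_biUnion hvC (Or.inr ?_)
        exact Set.mem_biUnion ⟨hRwv.symm, hwT⟩ hbw
    have hinner : ∀ v ∈ C ∩ D',
        ({v} ∪ ⋃ w ∈ G.neighborSet v ∩ D'ᶜ, RelCompIn G.Adj D'ᶜ w).ncard
          ≤ 1 + (k + c - 1) * c := by
      intro v hv
      have hU : (⋃ w ∈ G.neighborSet v ∩ D'ᶜ, RelCompIn G.Adj D'ᶜ w).ncard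
          ≤ (k + c - 1) * c := by
        have h1 := ncard_biUnion_le' (Set.toFinite (G.neighborSet v ∩ D'ᶜ))
          (fun w => RelCompIn G.Adj D'ᶜ w) (fun w => Set.toFinite _)
          (m := c) (fun w hw => hD'c w hw.2)
        have h2 : (G.neighborSet v ∩ D'ᶜ).ncard ≤ k + c - 1 := by
          calc (G.neighborSet v ∩ D'ᶜ).ncard
              ≤ (G.neighborSet v).ncard :=
                Set.ncard_le_ncard Set.inter_subset_left (Set.toFinite _)
            _ = G.degree v := by
                rw [Set.ncard_eq_toFinset_card', ← SimpleGraph.neighborFinset_def]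
                rfl
            _ ≤ k + c - 1 := hCdeg v hv.1
        exact le_trans h1 (Nat.mul_le_mul_right c h2)
      calc ({v} ∪ ⋃ w ∈ G.neighborSet v ∩ D'ᶜ, RelCompIn G.Adj D'ᶜ w).ncard
          ≤ ({v} : Set V).ncard + (⋃ w ∈ G.neighborSet v ∩ D'ᶜ, RelCompIn G.Adj D'ᶜ w).ncard :=
            Set.ncard_union_le _ _
        _ ≤ 1 + (k + c - 1) * c := by
            rw [Set.ncard_singleton]; exact Nat.add_le_add_left hU 1
    have hCle : C.ncard ≤ (C ∩ D').ncard * (1 + (k + c - 1) * c) := by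
      refine le_trans (Set.ncard_le_ncard hcover (Set.toFinite _)) ?_
      exact ncard_biUnion_le' (Set.toFinite _) _ (fun v => Set.toFinite _) hinner
    have hCD'le : (C ∩ D').ncard ≤ k :=
      le_trans (Set.ncard_le_ncard Set.inter_subset_right (Set.toFinite _)) hD'k
    calc C.ncard ≤ (C ∩ D').ncard * (1 + (k + c - 1) * c) := hCle
      _ ≤ k * (1 + (k + c - 1) * c) := Nat.mul_le_mul_right _ hCD'le
      _ ≤ k * (c * (k + c)) := by
          apply Nat.mul_le_mul_left
          have : 1 + (k + c - 1) * c ≤ c + (k + c - 1) * c := Nat.add_le_add_right hc _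
          calc 1 + (k + c - 1) * c ≤ c + (k + c - 1) * c := this
            _ = (1 + (k + c - 1)) * c := by ring
            _ = (k + c) * c := by congr 1; omega
            _ = c * (k + c) := Nat.mul_comm _ _
      _ = k * c * (k + c) := by ring
  · -- Case 1: C avoids D'
    push_neg at hCD'
    have haD : a ∈ Dᶜ := ha
    have haC : a ∈ C := ⟨haD, Relation.ReflTransGen.refl⟩
    have haD' : a ∉ D' := hCD' a haC
    have hCsub : C ⊆ RelCompIn G.Adj D'ᶜ a := by
      intro b hb
      refine ⟨hCD' b hb, ?_⟩
      have : ∀ x, RelReachIn G.Adj Dᶜ a x → RelReachIn G.Adj D'ᶜ a x := by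
        intro x hx
        induction hx with
        | refl => exact Relation.ReflTransGen.refl
        | @tail p q hap hpq ih =>
          obtain ⟨hpD, hqD, hadj⟩ := hpq
          have hpC : p ∈ C := ⟨hpD, hap⟩
          have hqC : q ∈ C := ⟨hqD, Relation.ReflTransGen.tail hap ⟨hpD, hqD, hadj⟩⟩
          exact Relation.ReflTransGen.tail ih ⟨hCD' p hpC, hCD' q hqC, hadj⟩
      exact this b hb.2
    calc C.ncard ≤ (RelCompIn G.Adj D'ᶜ a).ncard :=
          Set.ncard_le_ncard hCsub (Set.toFinite _)
      _ ≤ c := hD'c a haD'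
      _ ≤ k * c * (k + c) := by
          have h1 : c ≤ k * c := Nat.le_mul_of_pos_left c hk
          have h2 : k * c ≤ k * c * (k + c) := Nat.le_mul_of_pos_right _ (by omega)
          exact le_trans h1 h2
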